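/- Let g > 0. Let H, ũ : ℝ × ℝ × [0,1] → ℝ be C¹ functions satisfying, for all (t,x,λ) ∈ ℝ × ℝ × (0,1), the flat-bottom system ∂_t H + ∂_x(H ũ) = 0 and ∂_t ũ + ũ ∂_x ũ + g ∂_x ∫₀¹ H(t,x,λ') dλ' = 0. Let c : ℝ × ℝ → ℝ be a C¹ function such that inf_{λ ∈ [0,1]} |c(t,x) − ũ(t,x,λ)| > 0 for all (t,x) and ∫₀¹ g H(t,x,λ)/(c(t,x) − ũ(t,x,λ))² dλ = 1 for all (t,x). Then the function r(t,x) = c(t,x) − g ∫₀¹ H(t,x,λ)/(ũ(t,x,λ) − c(t,x)) dλ satisfies ∂_t r + c ∂_x r = 0 for all (t,x) ∈ ℝ × ℝ. -/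

import Mathlib

open MeasureTheory intervalIntegral Set


open MeasureTheory intervalIntegral Set

/-- Differentiation under the integral sign for `s ↦ ∫ l in 0..1, f s l`. -/
lemma aux_param (f f' : ℝ → ℝ → ℝ) (t : ℝ)
    (hfc : ContinuousOn (fun p : ℝ × ℝ => f p.1 p.2) ((Set.Icc (t-1) (t+1)) ×ˢ Set.Icc 0 1))
    (hf'c : ContinuousOn (fun p : ℝ × ℝ => f' p.1 p.2) ((Set.Icc (t-1) (t+1)) ×ˢ Set.Icc 0 1))
    (hdiff : ∀ l ∈ Set.Icc (0:ℝ) 1, ∀ s, HasDerivAt (fun s => f s l) (f' s l) s) :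
    HasDerivAt (fun s => ∫ l in (0:ℝ)..1, f s l) (∫ l in (0:ℝ)..1, f' t l) t := by
  obtain ⟨C, hC⟩ := (isCompact_Icc.prod isCompact_Icc).exists_bound_of_continuousOn hf'c
  have hball : ∀ s ∈ Metric.ball t 1, s ∈ Set.Icc (t-1) (t+1) := by
    intro s hs
    have := Metric.mem_ball.1 hs
    rw [Real.dist_eq] at this
    constructor <;> [linarith [abs_lt.1 this]; linarith [abs_lt.1 this]]
  have hsub : Set.uIoc (0:ℝ) 1 ⊆ Set.Icc (0:ℝ) 1 := by
    rw [Set.uIoc_of_le (by norm_num : (0:ℝ) ≤ 1)]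
    exact Set.Ioc_subset_Icc_self
  have hcont_slice : ∀ s ∈ Set.Icc (t-1) (t+1), ContinuousOn (f s) (Set.Icc 0 1) := by
    intro s hs
    have : ContinuousOn ((fun p : ℝ × ℝ => f p.1 p.2) ∘ (fun l : ℝ => (s, l))) (Set.Icc 0 1) :=
      hfc.comp ((continuous_const.prodMk continuous_id).continuousOn)
        (fun l hl => ⟨hs, hl⟩)
    exact this
  have key := intervalIntegral.hasDerivAt_integral_of_dominated_loc_of_deriv_le
    (F := f) (F' := f') (x₀ := t) (bound := fun _ => C) (a := 0) (b := 1)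
    (μ := volume) (s := Metric.ball t 1) (Metric.ball_mem_nhds t one_pos)
    (Filter.eventually_of_mem (Metric.ball_mem_nhds t one_pos)
      (fun s hs => ((hcont_slice s (hball s hs)).aestronglyMeasurable
        measurableSet_Icc).mono_measure (Measure.restrict_mono hsub le_rfl)))
    (((hcont_slice t (by constructor <;> linarith)).mono
      (by rw [Set.uIcc_of_le (by norm_num : (0:ℝ) ≤ 1)])).intervalIntegrable)
    (((show ContinuousOn (f' t) (Set.Icc 0 1) from
        hf'c.comp ((continuous_const.prodMk continuous_id).continuousOn)
          (fun l hl => ⟨⟨by linarith, by linarith⟩, hl⟩)).aestronglyMeasurable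
        measurableSet_Icc).mono_measure (Measure.restrict_mono hsub le_rfl))
    (Filter.Eventually.of_forall (fun l hl s hs =>
      hC (s, l) ⟨hball s hs, hsub hl⟩))
    intervalIntegrable_const
    (Filter.Eventually.of_forall (fun l hl s _ => hdiff l (hsub hl) s))
  exact key.2

open Set

/-- partial derivative in the first of three variables -/
noncomputable def pd1 (f : ℝ → ℝ → ℝ → ℝ) (t x l : ℝ) : ℝ :=
  fderiv ℝ (fun p : ℝ × ℝ × ℝ => f p.1 p.2.1 p.2.2) (t, x, l) (1, 0, 0)

/-- partial derivative in the second of three variables -/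
noncomputable def pd2 (f : ℝ → ℝ → ℝ → ℝ) (t x l : ℝ) : ℝ :=
  fderiv ℝ (fun p : ℝ × ℝ × ℝ => f p.1 p.2.1 p.2.2) (t, x, l) (0, 1, 0)

noncomputable def pc1 (f : ℝ → ℝ → ℝ) (t x : ℝ) : ℝ :=
  fderiv ℝ (fun p : ℝ × ℝ => f p.1 p.2) (t, x) (1, 0)

noncomputable def pc2 (f : ℝ → ℝ → ℝ) (t x : ℝ) : ℝ :=
  fderiv ℝ (fun p : ℝ × ℝ => f p.1 p.2) (t, x) (0, 1)

lemma pd1_hasDerivAt (f : ℝ → ℝ → ℝ → ℝ)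
    (hf : ContDiff ℝ 1 (fun p : ℝ × ℝ × ℝ => f p.1 p.2.1 p.2.2)) (t x l : ℝ) :
    HasDerivAt (fun s => f s x l) (pd1 f t x l) t := by
  have h1 : HasDerivAt (fun s : ℝ => (s, x, l)) ((1:ℝ), (0:ℝ), (0:ℝ)) t :=
    (hasDerivAt_id t).prodMk ((hasDerivAt_const t x).prodMk (hasDerivAt_const t l))
  exact ((hf.differentiable one_ne_zero (t, x, l)).hasFDerivAt.comp_hasDerivAt t h1)

lemma pd2_hasDerivAt (f : ℝ → ℝ → ℝ → ℝ)
    (hf : ContDiff ℝ 1 (fun p : ℝ × ℝ × ℝ => f p.1 p.2.1 p.2.2)) (t x l : ℝ) :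
    HasDerivAt (fun y => f t y l) (pd2 f t x l) x := by
  have h1 : HasDerivAt (fun y : ℝ => (t, y, l)) ((0:ℝ), (1:ℝ), (0:ℝ)) x :=
    (hasDerivAt_const x t).prodMk ((hasDerivAt_id x).prodMk (hasDerivAt_const x l))
  exact ((hf.differentiable one_ne_zero (t, x, l)).hasFDerivAt.comp_hasDerivAt x h1)

lemma pc1_hasDerivAt (f : ℝ → ℝ → ℝ)
    (hf : ContDiff ℝ 1 (fun p : ℝ × ℝ => f p.1 p.2)) (t x : ℝ) :
    HasDerivAt (fun s => f s x) (pc1 f t x) t := by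
  have h1 : HasDerivAt (fun s : ℝ => (s, x)) ((1:ℝ), (0:ℝ)) t :=
    (hasDerivAt_id t).prodMk (hasDerivAt_const t x)
  exact ((hf.differentiable one_ne_zero (t, x)).hasFDerivAt.comp_hasDerivAt t h1)

lemma pc2_hasDerivAt (f : ℝ → ℝ → ℝ)
    (hf : ContDiff ℝ 1 (fun p : ℝ × ℝ => f p.1 p.2)) (t x : ℝ) :
    HasDerivAt (fun y => f t y) (pc2 f t x) x := by
  have h1 : HasDerivAt (fun y : ℝ => (t, y)) ((0:ℝ), (1:ℝ)) x :=
    (hasDerivAt_const x t).prodMk (hasDerivAt_id x)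
  exact ((hf.differentiable one_ne_zero (t, x)).hasFDerivAt.comp_hasDerivAt x h1)

lemma pd1_continuous (f : ℝ → ℝ → ℝ → ℝ)
    (hf : ContDiff ℝ 1 (fun p : ℝ × ℝ × ℝ => f p.1 p.2.1 p.2.2)) :
    Continuous (fun p : ℝ × ℝ × ℝ => pd1 f p.1 p.2.1 p.2.2) := by
  have := hf.continuous_fderiv one_ne_zero
  exact this.clm_apply continuous_const

lemma pd2_continuous (f : ℝ → ℝ → ℝ → ℝ)
    (hf : ContDiff ℝ 1 (fun p : ℝ × ℝ × ℝ => f p.1 p.2.1 p.2.2)) :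
    Continuous (fun p : ℝ × ℝ × ℝ => pd2 f p.1 p.2.1 p.2.2) := by
  have := hf.continuous_fderiv one_ne_zero
  exact this.clm_apply continuous_const


theorem stmt12 (g : ℝ) (hg : 0 < g)
    (H u : ℝ → ℝ → ℝ → ℝ)
    (hH : ContDiff ℝ 1 (fun p : ℝ × ℝ × ℝ => H p.1 p.2.1 p.2.2))
    (hu : ContDiff ℝ 1 (fun p : ℝ × ℝ × ℝ => u p.1 p.2.1 p.2.2))
    (heq1 : ∀ t x : ℝ, ∀ l ∈ Set.Ioo (0:ℝ) 1,
      deriv (fun s => H s x l) t + deriv (fun y => H t y l * u t y l) x = 0)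
    (heq2 : ∀ t x : ℝ, ∀ l ∈ Set.Ioo (0:ℝ) 1,
      deriv (fun s => u s x l) t + u t x l * deriv (fun y => u t y l) x
        + g * deriv (fun y => ∫ m in (0:ℝ)..1, H t y m) x = 0)
    (c : ℝ → ℝ → ℝ)
    (hc : ContDiff ℝ 1 (fun p : ℝ × ℝ => c p.1 p.2))
    (hsep : ∀ t x : ℝ, ∃ δ : ℝ, 0 < δ ∧ ∀ l ∈ Set.Icc (0:ℝ) 1, δ ≤ |c t x - u t x l|)
    (hint : ∀ t x : ℝ,
      ∫ l in (0:ℝ)..1, g * H t x l / (c t x - u t x l) ^ 2 = 1) :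
    ∀ t x : ℝ,
      deriv (fun s => c s x - g * ∫ l in (0:ℝ)..1, H s x l / (u s x l - c s x)) t
        + c t x *
          deriv (fun y => c t y - g * ∫ l in (0:ℝ)..1, H t y l / (u t y l - c t y)) x
        = 0 := by
  intro t x
  -- the denominator never vanishes
  have hne : ∀ (s y : ℝ), ∀ l ∈ Set.Icc (0:ℝ) 1, u s y l - c s y ≠ 0 := by
    intro s y l hl h
    obtain ⟨δ, hδ, hd⟩ := hsep s y
    have h2 := hd l hl
    have : c s y - u s y l = 0 := by linarith [sub_eq_zero.mp h]
    rw [this, abs_zero] at h2; linarith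
  -- continuity facts
  have contH := hH.continuous
  have contu := hu.continuous
  have contc := hc.continuous
  have contpd1H := pd1_continuous H hH
  have contpd2H := pd2_continuous H hH
  have contpd1u := pd1_continuous u hu
  have contpd2u := pd2_continuous u hu
  have contpc1c : Continuous (fun p : ℝ × ℝ => pc1 c p.1 p.2) :=
    (hc.continuous_fderiv one_ne_zero).clm_apply continuous_const
  have contpc2c : Continuous (fun p : ℝ × ℝ => pc2 c p.1 p.2) :=
    (hc.continuous_fderiv one_ne_zero).clm_apply continuous_const
  -- embedding maps
  have mt : Continuous fun p : ℝ × ℝ => ((p.1, x, p.2) : ℝ × ℝ × ℝ) := by fun_prop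
  have mx : Continuous fun p : ℝ × ℝ => ((t, p.1, p.2) : ℝ × ℝ × ℝ) := by fun_prop
  have mtc : Continuous fun p : ℝ × ℝ => ((p.1, x) : ℝ × ℝ) := by fun_prop
  have mxc : Continuous fun p : ℝ × ℝ => ((t, p.1) : ℝ × ℝ) := by fun_prop
  -- abbreviations for the integrands of the derivatives
  set Px : ℝ := ∫ m in (0:ℝ)..1, pd2 H t x m with hPx
  -- derivative of the pressure integral
  have hP : HasDerivAt (fun y => ∫ m in (0:ℝ)..1, H t y m) Px x := by
    apply aux_param (fun y m => H t y m) (fun y m => pd2 H t y m) x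
    · exact (contH.comp mx).continuousOn
    · exact (contpd2H.comp mx).continuousOn
    · intro m _ y; exact pd2_hasDerivAt H hH t y m
  -- derivative in t of the Riemann-invariant integral
  set Ft' : ℝ → ℝ := fun l =>
    (pd1 H t x l * (u t x l - c t x) - H t x l * (pd1 u t x l - pc1 c t x)) /
      (u t x l - c t x) ^ 2 with hFt'
  set Fx' : ℝ → ℝ := fun l =>
    (pd2 H t x l * (u t x l - c t x) - H t x l * (pd2 u t x l - pc2 c t x)) /
      (u t x l - c t x) ^ 2 with hFx'
  have hIt : HasDerivAt (fun s => ∫ l in (0:ℝ)..1, H s x l / (u s x l - c s x))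
      (∫ l in (0:ℝ)..1, Ft' l) t := by
    apply aux_param (fun s l => H s x l / (u s x l - c s x))
      (fun s l =>
        (pd1 H s x l * (u s x l - c s x) - H s x l * (pd1 u s x l - pc1 c s x)) /
          (u s x l - c s x) ^ 2) t
    · exact ContinuousOn.div (contH.comp mt).continuousOn
        ((contu.comp mt).sub (contc.comp mtc)).continuousOn
        (fun p hp => hne p.1 x p.2 hp.2)
    · apply ContinuousOn.div
      · exact (((contpd1H.comp mt).mul ((contu.comp mt).sub (contc.comp mtc))).sub
          ((contH.comp mt).mul ((contpd1u.comp mt).sub (contpc1c.comp mtc)))).continuousOn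
      · exact (((contu.comp mt).sub (contc.comp mtc)).pow 2).continuousOn
      · exact fun p hp => pow_ne_zero 2 (hne p.1 x p.2 hp.2)
    · intro l hl s
      exact (pd1_hasDerivAt H hH s x l).div
        ((pd1_hasDerivAt u hu s x l).sub (pc1_hasDerivAt c hc s x)) (hne s x l hl)
  have hIx : HasDerivAt (fun y => ∫ l in (0:ℝ)..1, H t y l / (u t y l - c t y))
      (∫ l in (0:ℝ)..1, Fx' l) x := by
    apply aux_param (fun y l => H t y l / (u t y l - c t y))
      (fun y l =>
        (pd2 H t y l * (u t y l - c t y) - H t y l * (pd2 u t y l - pc2 c t y)) /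
          (u t y l - c t y) ^ 2) x
    · exact ContinuousOn.div (contH.comp mx).continuousOn
        ((contu.comp mx).sub (contc.comp mxc)).continuousOn
        (fun p hp => hne t p.1 p.2 hp.2)
    · apply ContinuousOn.div
      · exact (((contpd2H.comp mx).mul ((contu.comp mx).sub (contc.comp mxc))).sub
          ((contH.comp mx).mul ((contpd2u.comp mx).sub (contpc2c.comp mxc)))).continuousOn
      · exact (((contu.comp mx).sub (contc.comp mxc)).pow 2).continuousOn
      · exact fun p hp => pow_ne_zero 2 (hne t p.1 p.2 hp.2)
    · intro l hl y
      exact (pd2_hasDerivAt H hH t y l).div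
        ((pd2_hasDerivAt u hu t y l).sub (pc2_hasDerivAt c hc t y)) (hne t y l hl)
  set It : ℝ := ∫ l in (0:ℝ)..1, Ft' l with hItdef
  set Ix : ℝ := ∫ l in (0:ℝ)..1, Fx' l with hIxdef
  -- rewrite the two derivatives in the goal
  have hd1 : deriv (fun s => c s x - g * ∫ l in (0:ℝ)..1, H s x l / (u s x l - c s x)) t
      = pc1 c t x - g * It :=
    ((pc1_hasDerivAt c hc t x).sub (hIt.const_mul g)).deriv
  have hd2 : deriv (fun y => c t y - g * ∫ l in (0:ℝ)..1, H t y l / (u t y l - c t y)) x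
      = pc2 c t x - g * Ix :=
    ((pc2_hasDerivAt c hc t x).sub (hIx.const_mul g)).deriv
  rw [hd1, hd2]
  -- notation for the material derivative of c
  set A : ℝ := pc1 c t x + c t x * pc2 c t x with hA
  -- key integral identity
  have hkey : It + c t x * Ix = A / g := by
    -- integrable pieces
    have intFt : IntervalIntegrable Ft' volume 0 1 := by
      apply ContinuousOn.intervalIntegrable
      rw [Set.uIcc_of_le (by norm_num : (0:ℝ) ≤ 1)]
      apply ContinuousOn.div
      · fun_prop
      · fun_prop
      · exact fun l hl => pow_ne_zero 2 (hne t x l hl)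
    have intFx : IntervalIntegrable Fx' volume 0 1 := by
      apply ContinuousOn.intervalIntegrable
      rw [Set.uIcc_of_le (by norm_num : (0:ℝ) ≤ 1)]
      apply ContinuousOn.div
      · fun_prop
      · fun_prop
      · exact fun l hl => pow_ne_zero 2 (hne t x l hl)
    have step1 : It + c t x * Ix = ∫ l in (0:ℝ)..1, (Ft' l + c t x * Fx' l) := by
      rw [hItdef, hIxdef, ← intervalIntegral.integral_const_mul,
        ← intervalIntegral.integral_add intFt (intFx.const_mul _)]
    have step2 : (∫ l in (0:ℝ)..1, (Ft' l + c t x * Fx' l))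
        = ∫ l in (0:ℝ)..1,
            (-(pd2 H t x l) + ((g * Px + A) / g) *
              (g * H t x l / (c t x - u t x l) ^ 2)) := by
      apply intervalIntegral.integral_congr_ae
      have h1 : ∀ᵐ l : ℝ, l ≠ (1:ℝ) := by
        have : (volume ({(1:ℝ)} : Set ℝ)) = 0 := measure_singleton 1
        filter_upwards [measure_eq_zero_iff_ae_notMem.mp this] with l hl
        simpa using hl
      filter_upwards [h1] with l hl1 hl
      rw [Set.uIoc_of_le (by norm_num : (0:ℝ) ≤ 1)] at hl
      have hlo : l ∈ Set.Ioo (0:ℝ) 1 := ⟨hl.1, lt_of_le_of_ne hl.2 hl1⟩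
      have hlc : l ∈ Set.Icc (0:ℝ) 1 := ⟨le_of_lt hlo.1, le_of_lt hlo.2⟩
      have hd : u t x l - c t x ≠ 0 := hne t x l hlc
      have hd' : c t x - u t x l ≠ 0 := fun h => hd (by linarith [sub_eq_zero.mp h])
      -- the two evolution equations in pd form
      have e1 : pd1 H t x l = -(pd2 H t x l * u t x l + H t x l * pd2 u t x l) := by
        have := heq1 t x l hlo
        rw [(pd1_hasDerivAt H hH t x l).deriv,
          (show HasDerivAt (fun y => H t y l * u t y l) _ x from
            (pd2_hasDerivAt H hH t x l).mul (pd2_hasDerivAt u hu t x l)).deriv] at this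
        linarith
      have e2 : pd1 u t x l = -(u t x l * pd2 u t x l) - g * Px := by
        have := heq2 t x l hlo
        rw [(pd1_hasDerivAt u hu t x l).deriv, (pd2_hasDerivAt u hu t x l).deriv,
          hP.deriv] at this
        linarith
      rw [hFt', hFx']
      simp only
      rw [e1, e2, hA]
      field_simp
      ring
    have intpd2H : IntervalIntegrable (fun l => pd2 H t x l) volume 0 1 := by
      apply ContinuousOn.intervalIntegrable; fun_prop
    have intquot : IntervalIntegrable
        (fun l => g * H t x l / (c t x - u t x l) ^ 2) volume 0 1 := by
      apply ContinuousOn.intervalIntegrable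
      rw [Set.uIcc_of_le (by norm_num : (0:ℝ) ≤ 1)]
      apply ContinuousOn.div
      · fun_prop
      · fun_prop
      · intro l hl
        exact pow_ne_zero 2 (fun h => hne t x l hl (by linarith [sub_eq_zero.mp h]))
    have step3 : (∫ l in (0:ℝ)..1,
          (-(pd2 H t x l) + ((g * Px + A) / g) *
            (g * H t x l / (c t x - u t x l) ^ 2)))
        = -Px + ((g * Px + A) / g) * 1 := by
      have intneg : IntervalIntegrable (fun l => -pd2 H t x l) volume 0 1 := intpd2H.neg
      rw [intervalIntegral.integral_add intneg (intquot.const_mul _),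
        intervalIntegral.integral_neg, intervalIntegral.integral_const_mul,
        hint t x, hPx]
    rw [step1, step2, step3]
    field_simp
    ring
  -- finish
  have hg' : g ≠ 0 := ne_of_gt hg
  have : g * (It + c t x * Ix) = A := by rw [hkey]; field_simp
  rw [hA] at this
  nlinarith [this]
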